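/- Let ω > 0 and γ > 2ω be real numbers, let Â_t := exp(−t M̂_γ) with M̂_γ = [[0, ω²], [−1, γ]], and let P⁽²⁾ := diag(0,1). Then 2γ ∫₀^∞ dt Â_t^⊤ P⁽²⁾ Â_t = [[ω^{−2}, 0], [0, 1]]. -/

import Mathlib

open Matrix MeasureTheory

open Matrix MeasureTheory Real Set Filter

lemma aux_int_exp {b : ℝ} (hb : 0 < b) :
    ∫ x in Set.Ioi (0:ℝ), Real.exp (-(b*x)) = 1/b := by
  have hd : ∀ x ∈ Set.Ici (0:ℝ), HasDerivAt (fun y : ℝ => -(Real.exp (-(b*y))/b))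
      (Real.exp (-(b*x))) x := by
    intro x _
    have h1 : HasDerivAt (fun y : ℝ => -(b*y)) (-b) x := by
      have h := ((hasDerivAt_id x).const_mul b).neg; rw [mul_one] at h; exact h
    have h : HasDerivAt (fun y : ℝ => -(Real.exp (-(b*y))/b)) (-(Real.exp (-(b*x)) * -b / b)) x :=
      (h1.exp.div_const b).neg
    convert h using 1
    field_simp
  have hint : IntegrableOn (fun x : ℝ => Real.exp (-(b*x))) (Set.Ioi 0) := by
    simpa [neg_mul] using exp_neg_integrableOn_Ioi 0 hb
  have htend : Tendsto (fun y : ℝ => -(Real.exp (-(b*y))/b)) atTop (nhds 0) := by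
    have h1 : Tendsto (fun y : ℝ => -(b*y)) atTop atBot := by
      exact tendsto_neg_atTop_atBot.comp (tendsto_id.const_mul_atTop hb)
    have := (Real.tendsto_exp_atBot.comp h1).div_const b |>.neg
    simpa using this
  have := integral_Ioi_of_hasDerivAt_of_tendsto' hd hint htend
  simpa using this

lemma aux_comb (a b c : ℝ) {p q r : ℝ} (hp : 0<p) (hq : 0<q) (hr : 0<r) :
    ∫ t in Set.Ioi (0:ℝ),
      (a * Real.exp (-(p*t)) + b * Real.exp (-(q*t)) + c * Real.exp (-(r*t)))
      = a/p + b/q + c/r := by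
  have ip : IntegrableOn (fun t : ℝ => Real.exp (-(p*t))) (Set.Ioi 0) := by
    simpa [neg_mul] using exp_neg_integrableOn_Ioi 0 hp
  have iq : IntegrableOn (fun t : ℝ => Real.exp (-(q*t))) (Set.Ioi 0) := by
    simpa [neg_mul] using exp_neg_integrableOn_Ioi 0 hq
  have ir : IntegrableOn (fun t : ℝ => Real.exp (-(r*t))) (Set.Ioi 0) := by
    simpa [neg_mul] using exp_neg_integrableOn_Ioi 0 hr
  have h1 : ∫ t in Set.Ioi (0:ℝ),
      (a * Real.exp (-(p*t)) + b * Real.exp (-(q*t)) + c * Real.exp (-(r*t)))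
      = (∫ t in Set.Ioi (0:ℝ), a * Real.exp (-(p*t)) + b * Real.exp (-(q*t)))
        + ∫ t in Set.Ioi (0:ℝ), c * Real.exp (-(r*t)) :=
    integral_add ((ip.const_mul a).add (iq.const_mul b)) (ir.const_mul c)
  have h2 : ∫ t in Set.Ioi (0:ℝ), (a * Real.exp (-(p*t)) + b * Real.exp (-(q*t)))
      = (∫ t in Set.Ioi (0:ℝ), a * Real.exp (-(p*t)))
        + ∫ t in Set.Ioi (0:ℝ), b * Real.exp (-(q*t)) :=
    integral_add (ip.const_mul a) (iq.const_mul b)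
  rw [h1, h2, integral_const_mul, integral_const_mul, integral_const_mul,
      aux_int_exp hp, aux_int_exp hq, aux_int_exp hr]
  ring

open Matrix MeasureTheory Real Set Filter

lemma diag_fin_two (a b : ℝ) :
    Matrix.diagonal ![a, b] = !![a, 0; 0, b] := by
  ext i j; fin_cases i <;> fin_cases j <;> simp [Matrix.diagonal]

set_option maxHeartbeats 1000000 in
lemma exp_formula (γ d t : ℝ) (hd : d ≠ 0) (h1 : γ - d ≠ 0) (h2 : γ + d ≠ 0) :
    NormedSpace.exp (-(t • (!![0, (γ^2-d^2)/4; -1, γ] : Matrix (Fin 2) (Fin 2) ℝ)))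
      = !![((γ+d)/2 * Real.exp (-((γ-d)/2*t)) - (γ-d)/2 * Real.exp (-((γ+d)/2*t)))/d,
           (γ^2-d^2)/4*(Real.exp (-((γ+d)/2*t)) - Real.exp (-((γ-d)/2*t)))/d;
           (Real.exp (-((γ-d)/2*t)) - Real.exp (-((γ+d)/2*t)))/d,
           ((γ+d)/2*Real.exp (-((γ+d)/2*t)) - (γ-d)/2*Real.exp (-((γ-d)/2*t)))/d] := by
  have hST : (!![(γ^2-d^2)/4, (γ^2-d^2)/4; (γ-d)/2, (γ+d)/2] : Matrix (Fin 2) (Fin 2) ℝ) *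
      !![2/((γ-d)*d), -(1/d); -(2/((γ+d)*d)), 1/d] = 1 := by
    rw [Matrix.mul_fin_two, Matrix.one_fin_two]
    ext i j
    fin_cases i <;> fin_cases j <;> simp <;> field_simp <;> ring
  have hSinv : (!![(γ^2-d^2)/4, (γ^2-d^2)/4; (γ-d)/2, (γ+d)/2] : Matrix (Fin 2) (Fin 2) ℝ)⁻¹
      = !![2/((γ-d)*d), -(1/d); -(2/((γ+d)*d)), 1/d] :=
    Matrix.inv_eq_right_inv hST
  have hSu : IsUnit (!![(γ^2-d^2)/4, (γ^2-d^2)/4; (γ-d)/2, (γ+d)/2] : Matrix (Fin 2) (Fin 2) ℝ) := by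
    rw [Matrix.isUnit_iff_isUnit_det, Matrix.det_fin_two_of, isUnit_iff_ne_zero]
    have : (γ^2-d^2)/4 * ((γ+d)/2) - (γ^2-d^2)/4 * ((γ-d)/2) = (γ-d)*(γ+d)*d/4 := by ring
    rw [this]
    positivity
  have hconj : -(t • (!![0, (γ^2-d^2)/4; -1, γ] : Matrix (Fin 2) (Fin 2) ℝ))
      = !![(γ^2-d^2)/4, (γ^2-d^2)/4; (γ-d)/2, (γ+d)/2] *
        Matrix.diagonal ![-((γ-d)/2*t), -((γ+d)/2*t)] *
        (!![(γ^2-d^2)/4, (γ^2-d^2)/4; (γ-d)/2, (γ+d)/2] : Matrix (Fin 2) (Fin 2) ℝ)⁻¹ := by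
    rw [hSinv, diag_fin_two, Matrix.mul_fin_two, Matrix.mul_fin_two]
    ext i j
    fin_cases i <;> fin_cases j <;> simp [Matrix.smul_apply] <;> field_simp <;> ring
  rw [hconj, Matrix.exp_conj _ _ hSu, Matrix.exp_diagonal, hSinv, Pi.exp_def]
  simp only [← Real.exp_eq_exp_ℝ]
  rw [show (fun i => Real.exp (![-((γ-d)/2*t), -((γ+d)/2*t)] i))
      = ![Real.exp (-((γ-d)/2*t)), Real.exp (-((γ+d)/2*t))] from by
    funext i; fin_cases i <;> simp, diag_fin_two]
  rw [Matrix.mul_fin_two, Matrix.mul_fin_two]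
  ext i j
  fin_cases i <;> fin_cases j <;> simp <;> field_simp <;> ring

open Matrix MeasureTheory

set_option maxHeartbeats 1000000

/-- `2γ ∫₀^∞ Âₜᵀ P⁽²⁾ Âₜ dt = diag(ω^{-2}, 1)` for
`Âₜ = exp(−t M̂_γ)`, `M̂_γ = [[0, ω²], [−1, γ]]`, `P⁽²⁾ = diag(0,1)`. -/
theorem integral_AtT_P2_At
    (ω γ : ℝ) (hω : 0 < ω) (hγ : 2 * ω < γ)
    (M P : Matrix (Fin 2) (Fin 2) ℝ)
    (hM : M = !![0, ω ^ 2; -1, γ]) (hP : P = !![0, 0; 0, 1]) :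
    ∀ i j : Fin 2,
      2 * γ * ∫ t in Set.Ioi (0:ℝ),
          ((NormedSpace.exp (-(t • M)))ᵀ * P * NormedSpace.exp (-(t • M))) i j
        = (!![1 / ω ^ 2, 0; 0, 1] : Matrix (Fin 2) (Fin 2) ℝ) i j := by
  subst hM hP
  have hγ0 : 0 < γ := by nlinarith
  have h4 : 0 < γ^2 - 4*ω^2 := by nlinarith
  set d := Real.sqrt (γ^2 - 4*ω^2) with hdd
  have hd0 : 0 < d := Real.sqrt_pos.mpr h4
  have hd2 : d^2 = γ^2 - 4*ω^2 := Real.sq_sqrt h4.le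
  have hgd1 : 0 < γ - d := by nlinarith
  have hgd2 : 0 < γ + d := by linarith
  have hw2 : ω^2 = (γ^2 - d^2)/4 := by rw [hd2]; ring
  have hgg : γ^2 - d^2 ≠ 0 := by nlinarith
  set A : ℝ → Matrix (Fin 2) (Fin 2) ℝ := fun t =>
    !![((γ+d)/2 * Real.exp (-((γ-d)/2*t)) - (γ-d)/2 * Real.exp (-((γ+d)/2*t)))/d,
       (γ^2-d^2)/4*(Real.exp (-((γ+d)/2*t)) - Real.exp (-((γ-d)/2*t)))/d;
       (Real.exp (-((γ-d)/2*t)) - Real.exp (-((γ+d)/2*t)))/d,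
       ((γ+d)/2*Real.exp (-((γ+d)/2*t)) - (γ-d)/2*Real.exp (-((γ-d)/2*t)))/d] with hA
  have hef : ∀ t : ℝ, NormedSpace.exp
      (-(t • (!![0, ω^2; -1, γ] : Matrix (Fin 2) (Fin 2) ℝ))) = A t := by
    intro t
    rw [hw2, hA]
    exact exp_formula γ d t hd0.ne' hgd1.ne' hgd2.ne'
  intro i j
  fin_cases i <;> fin_cases j <;> simp only [hef, Fin.mk_zero, Fin.mk_one]
  · -- (0,0)
    have hb : ∀ t ∈ Set.Ioi (0:ℝ), ((A t)ᵀ * !![(0:ℝ), 0; 0, 1] * A t) 0 0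
        = (1/d^2) * Real.exp (-((γ-d)*t)) + (-(2/d^2)) * Real.exp (-(γ*t))
          + (1/d^2) * Real.exp (-((γ+d)*t)) := by
      intro t _
      rw [show -((γ-d)*t) = -((γ-d)/2*t) + -((γ-d)/2*t) by ring, Real.exp_add,
          show -(γ*t) = -((γ-d)/2*t) + -((γ+d)/2*t) by ring, Real.exp_add,
          show -((γ+d)*t) = -((γ+d)/2*t) + -((γ+d)/2*t) by ring, Real.exp_add, hA]
      simp [Matrix.mul_apply, Fin.sum_univ_two, Matrix.transpose_apply, Matrix.vecHead, Matrix.vecTail]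
      field_simp
      ring
    rw [MeasureTheory.setIntegral_congr_fun measurableSet_Ioi hb,
        aux_comb _ _ _ hgd1 hγ0 hgd2]
    simp only [Matrix.cons_val_zero, Matrix.cons_val', Matrix.of_apply, Matrix.cons_val_fin_one]
    try rw [hw2]
    field_simp [hgg]
    ring
  · -- (0,1)
    have hb : ∀ t ∈ Set.Ioi (0:ℝ), ((A t)ᵀ * !![(0:ℝ), 0; 0, 1] * A t) 0 1
        = (-((γ-d)/2/d^2)) * Real.exp (-((γ-d)*t)) + (γ/d^2) * Real.exp (-(γ*t))
          + (-((γ+d)/2/d^2)) * Real.exp (-((γ+d)*t)) := by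
      intro t _
      rw [show -((γ-d)*t) = -((γ-d)/2*t) + -((γ-d)/2*t) by ring, Real.exp_add,
          show -(γ*t) = -((γ-d)/2*t) + -((γ+d)/2*t) by ring, Real.exp_add,
          show -((γ+d)*t) = -((γ+d)/2*t) + -((γ+d)/2*t) by ring, Real.exp_add, hA]
      simp [Matrix.mul_apply, Fin.sum_univ_two, Matrix.transpose_apply, Matrix.vecHead, Matrix.vecTail]
      field_simp
      ring
    rw [MeasureTheory.setIntegral_congr_fun measurableSet_Ioi hb,
        aux_comb _ _ _ hgd1 hγ0 hgd2]
    simp only [Matrix.cons_val_zero, Matrix.cons_val_one, Matrix.head_cons,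
      Matrix.cons_val', Matrix.of_apply, Matrix.cons_val_fin_one]
    try rw [hw2]
    field_simp [hgg]
    ring
  · -- (1,0)
    have hb : ∀ t ∈ Set.Ioi (0:ℝ), ((A t)ᵀ * !![(0:ℝ), 0; 0, 1] * A t) 1 0
        = (-((γ-d)/2/d^2)) * Real.exp (-((γ-d)*t)) + (γ/d^2) * Real.exp (-(γ*t))
          + (-((γ+d)/2/d^2)) * Real.exp (-((γ+d)*t)) := by
      intro t _
      rw [show -((γ-d)*t) = -((γ-d)/2*t) + -((γ-d)/2*t) by ring, Real.exp_add,
          show -(γ*t) = -((γ-d)/2*t) + -((γ+d)/2*t) by ring, Real.exp_add,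
          show -((γ+d)*t) = -((γ+d)/2*t) + -((γ+d)/2*t) by ring, Real.exp_add, hA]
      simp [Matrix.mul_apply, Fin.sum_univ_two, Matrix.transpose_apply, Matrix.vecHead, Matrix.vecTail]
      field_simp
      ring
    rw [MeasureTheory.setIntegral_congr_fun measurableSet_Ioi hb,
        aux_comb _ _ _ hgd1 hγ0 hgd2]
    simp only [Matrix.cons_val_zero, Matrix.cons_val_one, Matrix.head_cons,
      Matrix.cons_val', Matrix.of_apply, Matrix.cons_val_fin_one]
    try rw [hw2]
    field_simp [hgg]
    ring
  · -- (1,1)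
    have hb : ∀ t ∈ Set.Ioi (0:ℝ), ((A t)ᵀ * !![(0:ℝ), 0; 0, 1] * A t) 1 1
        = (((γ-d)/2)^2/d^2) * Real.exp (-((γ-d)*t))
          + (-(2*((γ^2-d^2)/4)/d^2)) * Real.exp (-(γ*t))
          + (((γ+d)/2)^2/d^2) * Real.exp (-((γ+d)*t)) := by
      intro t _
      rw [show -((γ-d)*t) = -((γ-d)/2*t) + -((γ-d)/2*t) by ring, Real.exp_add,
          show -(γ*t) = -((γ-d)/2*t) + -((γ+d)/2*t) by ring, Real.exp_add,
          show -((γ+d)*t) = -((γ+d)/2*t) + -((γ+d)/2*t) by ring, Real.exp_add, hA]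
      simp [Matrix.mul_apply, Fin.sum_univ_two, Matrix.transpose_apply, Matrix.vecHead, Matrix.vecTail]
      field_simp
      ring
    rw [MeasureTheory.setIntegral_congr_fun measurableSet_Ioi hb,
        aux_comb _ _ _ hgd1 hγ0 hgd2]
    simp only [Matrix.cons_val_one, Matrix.head_cons, Matrix.head_fin_const,
      Matrix.cons_val', Matrix.of_apply, Matrix.cons_val_fin_one]
    try rw [hw2]
    field_simp [hgg]
    ring
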